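/- Let k ≥ 1, n ≥ 0, and for each j = 1,…,k let T_j = (t_{j,i})_{i≥0} be a sequence of nonnegative integers with ∑_i t_{j,i} = n+j−1. There exists a chain of ideals I₁ ⊇ I₂ ⊇ ⋯ ⊇ I_k of R̂ = ℂ[[x,y]] with dim_ℂ(R̂/I_j) = n+j−1 and t_i(I_j) = t_{j,i} for all i and j if and only if: (1) each T_j is admissible, and (2) for each j = 2,…,k there exists an index m_j such that t_{j,m_j} = t_{j−1,m_j} + 1 and t_{j,i} = t_{j−1,i} for all i ≠ m_j. -/

import Mathlib

/-!
Statement 13: k-tuples of sequences (T₁,…,T_k), with |T_j| = n+j−1, arise as the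
Hilbert–Samuel types of a chain of ideals I₁ ⊇ ⋯ ⊇ I_k of ℂ[[x,y]] of colengths
n, n+1, …, n+k−1 iff each T_j is admissible and consecutive types differ by exactly one
increment.
-/

set_option synthInstance.maxHeartbeats 1000000
set_option maxHeartbeats 1000000

noncomputable section

/-- `R̂ = ℂ[[x,y]]`. -/
abbrev Rhat : Type := MvPowerSeries (Fin 2) ℂ

/-- The maximal ideal `m = (x,y)` of `ℂ[[x,y]]`. -/
def mxy : Ideal Rhat := Ideal.span {MvPowerSeries.X 0, MvPowerSeries.X 1}

/-- The `i`-th entry `t_i(I) = dim_ℂ (m^i / (I ∩ m^i + m^{i+1}))` of the Hilbert–Samuel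
type of an ideal `I`. -/
def hsType (I : Ideal Rhat) (i : ℕ) : ℕ :=
  Module.finrank ℂ
    (↥(mxy ^ i) ⧸ Submodule.comap (mxy ^ i).subtype ((I ⊓ mxy ^ i) ⊔ mxy ^ (i + 1)))

/-- A sequence `(t_i)` is admissible if there is `d` with `t_i = i+1` for `i < d`,
`t_d ≤ d`, and `t` weakly decreasing from `d` on. -/
def Admissible (t : ℕ → ℕ) : Prop :=
  ∃ d : ℕ, (∀ i, i < d → t i = i + 1) ∧ t d ≤ d ∧ ∀ i, d ≤ i → t (i + 1) ≤ t i

open MvPowerSeries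

/-- exponent (a,b) -/
def ex (a b : ℕ) : Fin 2 →₀ ℕ := Finsupp.single 0 a + Finsupp.single 1 b

@[simp] lemma ex_apply0 (a b : ℕ) : ex a b 0 = a := by
  simp [ex, Finsupp.single_apply]

@[simp] lemma ex_apply1 (a b : ℕ) : ex a b 1 = b := by
  simp [ex, Finsupp.single_apply]

lemma ex_eq (e : Fin 2 →₀ ℕ) : ex (e 0) (e 1) = e := by
  ext x
  fin_cases x
  · simp
  · simp

def deg (e : Fin 2 →₀ ℕ) : ℕ := e 0 + e 1

@[simp] lemma deg_ex (a b : ℕ) : deg (ex a b) = a + b := by simp [deg]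

lemma deg_add (u v : Fin 2 →₀ ℕ) : deg (u + v) = deg u + deg v := by
  simp [deg]; ring

lemma le_of_comp {m e : Fin 2 →₀ ℕ} (h0 : m 0 ≤ e 0) (h1 : m 1 ≤ e 1) : m ≤ e := by
  rw [Finsupp.le_def]
  intro x
  fin_cases x
  · exact h0
  · exact h1

lemma comp_of_le {m e : Fin 2 →₀ ℕ} (h : m ≤ e) : m 0 ≤ e 0 ∧ m 1 ≤ e 1 :=
  ⟨Finsupp.le_def.1 h 0, Finsupp.le_def.1 h 1⟩

lemma deg_mono {m e : Fin 2 →₀ ℕ} (h : m ≤ e) : deg m ≤ deg e := by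
  obtain ⟨h0, h1⟩ := comp_of_le h
  simp only [deg]; omega

/-- the ideal of power series of order ≥ i -/
def V (i : ℕ) : Ideal Rhat where
  carrier := {f | ∀ e, deg e < i → coeff (R := ℂ) e f = 0}
  add_mem' := by
    intro f g hf hg e he
    simp only [map_add, hf e he, hg e he, add_zero]
  zero_mem' := by intro e he; simp
  smul_mem' := by
    intro r f hf e he
    rw [smul_eq_mul, coeff_mul]
    apply Finset.sum_eq_zero
    intro p hp
    rw [Finset.HasAntidiagonal.mem_antidiagonal] at hp
    have hd : deg p.1 + deg p.2 = deg e := by rw [← deg_add, hp]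
    rw [hf p.2 (by omega), mul_zero]

lemma mem_V {i : ℕ} {f : Rhat} : f ∈ V i ↔ ∀ e, deg e < i → coeff (R := ℂ) e f = 0 := Iff.rfl

lemma mul_mem_V {i j : ℕ} {f g : Rhat} (hf : f ∈ V i) (hg : g ∈ V j) : f * g ∈ V (i + j) := by
  intro e he
  rw [coeff_mul]
  apply Finset.sum_eq_zero
  intro p hp
  rw [Finset.HasAntidiagonal.mem_antidiagonal] at hp
  have hd : deg p.1 + deg p.2 = deg e := by rw [← deg_add, hp]
  rcases lt_or_ge (deg p.1) i with h | h
  · rw [hf p.1 h, zero_mul]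
  · rw [hg p.2 (by omega), mul_zero]

lemma X_mem_V1 (s : Fin 2) : (X s : Rhat) ∈ V 1 := by
  intro e he
  have he0 : e = 0 := by
    rw [← ex_eq e]
    have : e 0 = 0 ∧ e 1 = 0 := by
      have := deg_mono (le_refl e)
      simp only [deg] at he ⊢
      omega
    rw [this.1, this.2]
    ext x
    fin_cases x <;> simp
  rw [he0]
  simpa using (MvPowerSeries.coeff_zero_X s : coeff (R := ℂ) 0 (X s : Rhat) = 0)

lemma mxy_le_V1 : mxy ≤ V 1 := by
  rw [mxy, Ideal.span_le]
  rintro x hx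
  simp only [Set.mem_insert_iff, Set.mem_singleton_iff] at hx
  rcases hx with rfl | rfl
  · exact X_mem_V1 0
  · exact X_mem_V1 1

lemma pow_le_V (i : ℕ) : mxy ^ i ≤ V i := by
  induction i with
  | zero =>
    intro f _ e he
    omega
  | succ i ih =>
    rw [pow_succ]
    refine Ideal.mul_le.2 fun f hf g hg => ?_
    exact mul_mem_V (ih hf) (mxy_le_V1 hg)

lemma X_mem_mxy (s : Fin 2) : (X s : Rhat) ∈ mxy := by
  apply Ideal.subset_span
  fin_cases s <;> simp

lemma monomial_mem_pow (a b : ℕ) : (monomial (R := ℂ) (ex a b) 1 : Rhat) ∈ mxy ^ (a + b) := by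
  have hxy : (monomial (R := ℂ) (ex a b) 1 : Rhat) = X 0 ^ a * X 1 ^ b := by
    rw [X_pow_eq, X_pow_eq, monomial_mul_monomial, one_mul, ex]
  rw [hxy, pow_add]
  exact Ideal.mul_mem_mul (Ideal.pow_mem_pow (X_mem_mxy 0) a) (Ideal.pow_mem_pow (X_mem_mxy 1) b)

/-- selector: the canonical degree-i divisor's y-exponent -/
def bsel (i : ℕ) (e : Fin 2 →₀ ℕ) : ℕ := i - min (e 0) i

def gpart (f : Rhat) (i b : ℕ) : Rhat :=
  fun u => if bsel i (u + ex (i - b) b) = b then coeff (R := ℂ) (u + ex (i - b) b) f else 0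

lemma V_le_pow (i : ℕ) : V i ≤ mxy ^ i := by
  intro f hf
  have hdecomp : f = ∑ b ∈ Finset.range (i + 1),
      (monomial (R := ℂ) (ex (i - b) b) 1 : Rhat) * gpart f i b := by
    apply MvPowerSeries.ext
    intro e
    rw [map_sum]
    have hterm : ∀ b ∈ Finset.range (i + 1),
        coeff (R := ℂ) e ((monomial (R := ℂ) (ex (i - b) b) 1 : Rhat) * gpart f i b)
          = if ex (i - b) b ≤ e ∧ bsel i e = b then coeff (R := ℂ) e f else 0 := by
      intro b _
      rw [coeff_monomial_mul]
      by_cases hle : ex (i - b) b ≤ e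
      · rw [if_pos hle, one_mul]
        have hcan : e - ex (i - b) b + ex (i - b) b = e := tsub_add_cancel_of_le hle
        have : coeff (R := ℂ) (e - ex (i - b) b) (gpart f i b)
            = if bsel i e = b then coeff (R := ℂ) e f else 0 := by
          rw [coeff_apply, gpart]
          rw [hcan]
        rw [this]
        by_cases hb : bsel i e = b
        · rw [if_pos hb, if_pos ⟨hle, hb⟩]
        · rw [if_neg hb, if_neg (by tauto)]
      · rw [if_neg hle, if_neg (by tauto)]
    rw [Finset.sum_congr rfl hterm]
    rcases lt_or_ge (deg e) i with hlt | hge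
    · rw [hf e hlt]
      symm
      apply Finset.sum_eq_zero
      intro b _
      split_ifs <;> rfl
    · rw [Finset.sum_eq_single_of_mem (bsel i e)]
      · rw [if_pos]
        constructor
        · apply le_of_comp
          · rw [ex_apply0]
            simp only [bsel]
            omega
          · rw [ex_apply1]
            simp only [bsel, deg] at hge ⊢
            omega
        · rfl
      · simp only [Finset.mem_range, bsel]
        omega
      · intro b _ hb
        rw [if_neg (by tauto)]
  rw [hdecomp]
  apply Submodule.sum_mem
  intro b hb
  rw [Finset.mem_range] at hb
  have : i - b + b = i := by omega
  apply Ideal.mul_mem_right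
  have hmem := monomial_mem_pow (i - b) b
  rwa [this] at hmem

lemma pow_eq_V (i : ℕ) : mxy ^ i = V i :=
  le_antisymm (pow_le_V i) (V_le_pow i)

/-- degree-i coefficient extraction -/
def cmap (i : ℕ) : Rhat →ₗ[ℂ] (Fin (i + 1) → ℂ) :=
  LinearMap.pi fun b => coeff (R := ℂ) (ex (i - (b : ℕ)) (b : ℕ))

lemma cmap_apply (i : ℕ) (f : Rhat) (b : Fin (i + 1)) :
    cmap i f b = coeff (R := ℂ) (ex (i - (b : ℕ)) (b : ℕ)) f := rfl

/-- lift of a coefficient vector to a homogeneous series of degree i -/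
def hlift (i : ℕ) (v : Fin (i + 1) → ℂ) : Rhat :=
  fun e => if h : e 0 + e 1 = i then v ⟨e 1, by omega⟩ else 0

lemma coeff_hlift (i : ℕ) (v : Fin (i + 1) → ℂ) (e : Fin 2 →₀ ℕ) :
    coeff (R := ℂ) e (hlift i v) = if h : e 0 + e 1 = i then v ⟨e 1, by omega⟩ else 0 := rfl

lemma hlift_mem_V (i : ℕ) (v : Fin (i + 1) → ℂ) : hlift i v ∈ V i := by
  intro e he
  rw [coeff_hlift]
  rw [dif_neg]
  simp only [deg] at he
  omega

lemma cmap_hlift (i : ℕ) (v : Fin (i + 1) → ℂ) : cmap i (hlift i v) = v := by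
  funext b
  have hb : (b : ℕ) < i + 1 := b.isLt
  rw [cmap_apply, coeff_hlift]
  have hcond : (ex (i - (b : ℕ)) (b : ℕ)) 0 + (ex (i - (b : ℕ)) (b : ℕ)) 1 = i := by
    rw [ex_apply0, ex_apply1]; omega
  rw [dif_pos hcond]
  congr 1
  apply Fin.ext
  simp

lemma single0_le_ex {a b : ℕ} : Finsupp.single 0 1 ≤ ex a b ↔ 1 ≤ a := by
  constructor
  · intro h
    have := (comp_of_le h).1
    simpa using this
  · intro h
    apply le_of_comp <;> simp [Finsupp.single_apply] <;> omega

lemma single1_le_ex {a b : ℕ} : Finsupp.single 1 1 ≤ ex a b ↔ 1 ≤ b := by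
  constructor
  · intro h
    have := (comp_of_le h).2
    simpa using this
  · intro h
    apply le_of_comp <;> simp [Finsupp.single_apply] <;> omega

lemma ex_sub_single0 (a b : ℕ) : ex a b - Finsupp.single 0 1 = ex (a - 1) b := by
  ext x
  fin_cases x <;> simp [Finsupp.tsub_apply, Finsupp.single_apply]

lemma ex_sub_single1 (a b : ℕ) : ex a b - Finsupp.single 1 1 = ex a (b - 1) := by
  ext x
  fin_cases x <;> simp [Finsupp.tsub_apply, Finsupp.single_apply]

def mulX (n : ℕ) : (Fin (n + 1) → ℂ) →ₗ[ℂ] (Fin (n + 2) → ℂ) where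
  toFun v := fun b => if h : (b : ℕ) ≤ n then v ⟨b, by omega⟩ else 0
  map_add' := by
    intro u v; funext b; by_cases h : (b : ℕ) ≤ n <;> simp [h]
  map_smul' := by
    intro c v; funext b; by_cases h : (b : ℕ) ≤ n <;> simp [h]

def mulY (n : ℕ) : (Fin (n + 1) → ℂ) →ₗ[ℂ] (Fin (n + 2) → ℂ) where
  toFun v := fun b => if h : 1 ≤ (b : ℕ) then v ⟨(b : ℕ) - 1, by have := b.isLt; omega⟩ else 0
  map_add' := by
    intro u v; funext b; by_cases h : 1 ≤ (b : ℕ) <;> simp [h]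
  map_smul' := by
    intro c v; funext b; by_cases h : 1 ≤ (b : ℕ) <;> simp [h]

lemma cmap_X0_mul (i : ℕ) (f : Rhat) :
    cmap (i + 1) ((X 0 : Rhat) * f) = mulX i (cmap i f) := by
  funext b
  have hb : (b : ℕ) < i + 2 := b.isLt
  rw [cmap_apply, X_def, coeff_monomial_mul]
  show _ = (if h : (b : ℕ) ≤ i then cmap i f ⟨b, by omega⟩ else 0)
  by_cases h : (b : ℕ) ≤ i
  · rw [if_pos (single0_le_ex.2 (by omega)), one_mul, ex_sub_single0]
    have h2 : i + 1 - (b : ℕ) - 1 = i - (b : ℕ) := by omega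
    rw [h2, dif_pos h, cmap_apply]
  · rw [if_neg, dif_neg h]
    rw [single0_le_ex]
    omega

lemma cmap_X1_mul (i : ℕ) (f : Rhat) :
    cmap (i + 1) ((X 1 : Rhat) * f) = mulY i (cmap i f) := by
  funext b
  have hb : (b : ℕ) < i + 2 := b.isLt
  rw [cmap_apply, X_def, coeff_monomial_mul]
  show _ = (if h : 1 ≤ (b : ℕ) then cmap i f ⟨(b : ℕ) - 1, by omega⟩ else 0)
  by_cases h : 1 ≤ (b : ℕ)
  · rw [if_pos (single1_le_ex.2 h), one_mul, ex_sub_single1]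
    have h2 : i + 1 - (b : ℕ) = i - ((b : ℕ) - 1) := by omega
    rw [h2, dif_pos h, cmap_apply]
  · rw [if_neg, dif_neg h]
    rw [single1_le_ex]
    omega

def Wsub (I : Ideal Rhat) (i : ℕ) : Submodule ℂ (Fin (i + 1) → ℂ) :=
  Submodule.map (cmap i) ((I ⊓ V i).restrictScalars ℂ)

lemma mem_Wsub {I : Ideal Rhat} {i : ℕ} {v : Fin (i + 1) → ℂ} :
    v ∈ Wsub I i ↔ ∃ f, (f ∈ I ∧ f ∈ V i) ∧ cmap i f = v := by
  simp [Wsub, Submodule.mem_map, Submodule.mem_inf]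

lemma cmap_eq_zero_of_mem_V_succ {i : ℕ} {f : Rhat} (hf : f ∈ V (i + 1)) :
    cmap i f = 0 := by
  funext b
  have hb : (b : ℕ) < i + 1 := b.isLt
  rw [cmap_apply]
  exact hf _ (by simp only [deg, ex_apply0, ex_apply1]; omega)

lemma mem_V_succ_of_cmap_eq_zero {i : ℕ} {f : Rhat} (hf : f ∈ V i) (h : cmap i f = 0) :
    f ∈ V (i + 1) := by
  intro e he
  rcases lt_or_ge (deg e) i with hlt | hge
  · exact hf e hlt
  · have hdeg : e 0 + e 1 = i := by simp only [deg] at he hge; omega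
    have he1 : e 1 < i + 1 := by omega
    have hee : e = ex (i - e 1) (e 1) := by
      have h0 : e 0 = i - e 1 := by omega
      conv_lhs => rw [← ex_eq e]
      rw [h0]
    rw [hee]
    have := congrFun h ⟨e 1, he1⟩
    rw [cmap_apply] at this
    simpa using this

lemma mem_K_iff (I : Ideal Rhat) (i : ℕ) (x : Rhat) (hx : x ∈ V i) :
    x ∈ ((I ⊓ V i) ⊔ V (i + 1)) ↔ cmap i x ∈ Wsub I i := by
  constructor
  · intro h
    rcases Submodule.mem_sup.1 h with ⟨y, hy, z, hz, rfl⟩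
    rw [map_add, cmap_eq_zero_of_mem_V_succ hz, add_zero]
    exact mem_Wsub.2 ⟨y, ⟨(Submodule.mem_inf.1 hy).1, (Submodule.mem_inf.1 hy).2⟩, rfl⟩
  · intro h
    rcases mem_Wsub.1 h with ⟨f, ⟨hfI, hfV⟩, hcf⟩
    have hsub : x - f ∈ V (i + 1) := by
      apply mem_V_succ_of_cmap_eq_zero (Submodule.sub_mem _ hx hfV)
      rw [map_sub, hcf, sub_self]
    have hre : x = f + (x - f) := by ring
    rw [hre]
    exact Submodule.add_mem_sup (Submodule.mem_inf.2 ⟨hfI, hfV⟩) hsub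

lemma hsType_add (I : Ideal Rhat) (i : ℕ) :
    hsType I i + Module.finrank ℂ (Wsub I i) = i + 1 := by
  classical
  set p : Ideal Rhat := mxy ^ i with hp
  set q : Submodule Rhat ↥p :=
    Submodule.comap p.subtype ((I ⊓ mxy ^ i) ⊔ mxy ^ (i + 1)) with hq
  have e1 : (↥p ⧸ q.restrictScalars ℂ) ≃ₗ[ℂ] (↥p ⧸ q) :=
    Submodule.Quotient.restrictScalarsEquiv ℂ q
  let ψ : ↥p →ₗ[ℂ] ((Fin (i + 1) → ℂ) ⧸ Wsub I i) :=
    { toFun := fun x => Submodule.Quotient.mk (cmap i x.1)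
      map_add' := by
        intro x y
        simp only [Submodule.coe_add, map_add, Submodule.Quotient.mk_add]
      map_smul' := by
        intro c x
        simp only [SetLike.val_smul_of_tower, map_smul, Submodule.Quotient.mk_smul,
          RingHom.id_apply] }
  have hKV : ((I ⊓ mxy ^ i) ⊔ mxy ^ (i + 1) : Ideal Rhat) = (I ⊓ V i) ⊔ V (i + 1) := by
    rw [pow_eq_V, pow_eq_V]
  have hker : LinearMap.ker ψ = q.restrictScalars ℂ := by
    ext x
    have hxV : (x : Rhat) ∈ V i := by
      rw [← pow_eq_V i]; exact x.2
    simp only [LinearMap.mem_ker, Submodule.restrictScalars_mem, hq, Submodule.mem_comap,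
      Submodule.subtype_apply, hKV]
    rw [show (ψ x = 0) ↔ cmap i (x : Rhat) ∈ Wsub I i from Submodule.Quotient.mk_eq_zero _]
    exact (mem_K_iff I i _ hxV).symm
  have hsurj : Function.Surjective ψ := by
    intro vbar
    obtain ⟨v, rfl⟩ := Submodule.Quotient.mk_surjective _ vbar
    refine ⟨⟨hlift i v, ?_⟩, ?_⟩
    · rw [hp, pow_eq_V]; exact hlift_mem_V i v
    · show Submodule.Quotient.mk (cmap i (hlift i v)) = _
      rw [cmap_hlift]
  have e2 : (↥p ⧸ q.restrictScalars ℂ) ≃ₗ[ℂ] ((Fin (i + 1) → ℂ) ⧸ Wsub I i) :=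
    (Submodule.quotEquivOfEq _ _ hker.symm).trans (ψ.quotKerEquivOfSurjective hsurj)
  have hdim : hsType I i = Module.finrank ℂ ((Fin (i + 1) → ℂ) ⧸ Wsub I i) := by
    rw [hsType]
    rw [← e1.finrank_eq, e2.finrank_eq]
  rw [hdim]
  rw [Submodule.finrank_quotient_add_finrank (Wsub I i)]
  exact Module.finrank_fin_fun ℂ

lemma finrank_Wsub_le (I : Ideal Rhat) (i : ℕ) :
    Module.finrank ℂ (Wsub I i) ≤ i + 1 := by
  have := hsType_add I i
  omega

lemma mulX_apply (n : ℕ) (v : Fin (n + 1) → ℂ) (b : Fin (n + 2)) :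
    mulX n v b = if h : (b : ℕ) ≤ n then v ⟨b, by omega⟩ else 0 := rfl

lemma mulY_apply (n : ℕ) (v : Fin (n + 1) → ℂ) (b : Fin (n + 2)) :
    mulY n v b = if h : 1 ≤ (b : ℕ) then v ⟨(b : ℕ) - 1, by have := b.isLt; omega⟩ else 0 := rfl

def Ev (n : ℕ) (c : ℂ) (v : Fin (n + 1) → ℂ) : ℂ :=
  ∑ b : Fin (n + 1), c ^ (n - (b : ℕ)) * v b

lemma Ev_mulY (n : ℕ) (c : ℂ) (v : Fin (n + 1) → ℂ) :
    Ev (n + 1) c (mulY n v) = Ev n c v := by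
  rw [Ev, Ev, Fin.sum_univ_succ]
  have h0 : mulY n v 0 = 0 := rfl
  rw [h0, mul_zero, zero_add]
  apply Finset.sum_congr rfl
  intro b _
  have hs : mulY n v b.succ = v b := by
    rw [mulY_apply, dif_pos (by simp [Fin.val_succ])]
    congr 1
  rw [hs, Fin.val_succ]
  have he : n + 1 - ((b : ℕ) + 1) = n - (b : ℕ) := by omega
  rw [he]

lemma Ev_sub_smul (n : ℕ) (c : ℂ) (v u : Fin (n + 1) → ℂ) (r : ℂ) :
    Ev n c (v - r • u) = Ev n c v - r * Ev n c u := by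
  simp only [Ev, Pi.sub_apply, Pi.smul_apply, smul_eq_mul, mul_sub,
    Finset.sum_sub_distrib, Finset.mul_sum]
  congr 1
  apply Finset.sum_congr rfl
  intro b _
  ring

lemma exists_preimage (n : ℕ) (c : ℂ) (z : Fin (n + 2) → ℂ) (hz : Ev (n + 1) c z = 0) :
    ∃ g : Fin (n + 1) → ℂ, mulX n g - c • mulY n g = z := by
  classical
  set zf : ℕ → ℂ := fun j => if h : j < n + 2 then z ⟨j, h⟩ else 0 with hzf
  set G : ℕ → ℂ := fun b => ∑ j ∈ Finset.range (b + 1), c ^ (b - j) * zf j with hG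
  have hG0 : G 0 = zf 0 := by simp [hG]
  have hGrec : ∀ m, G (m + 1) = c * G m + zf (m + 1) := by
    intro m
    rw [hG]
    simp only
    rw [Finset.sum_range_succ]
    have : ∀ j ∈ Finset.range (m + 1), c ^ (m + 1 - j) * zf j = c * (c ^ (m - j) * zf j) := by
      intro j hj
      rw [Finset.mem_range] at hj
      have : m + 1 - j = (m - j) + 1 := by omega
      rw [this, pow_succ]
      ring
    rw [Finset.sum_congr rfl this, ← Finset.mul_sum]
    simp
  have hEvG : Ev (n + 1) c z = G (n + 1) := by
    rw [Ev, hG]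
    simp only
    rw [Finset.sum_range fun j => c ^ (n + 1 - j) * zf j]
    apply Finset.sum_congr rfl
    intro b _
    congr 1
    rw [hzf]
    simp only
    rw [dif_pos b.isLt]
  refine ⟨fun b => G (b : ℕ), ?_⟩
  funext b
  have hb2 : (b : ℕ) < n + 2 := b.isLt
  have hzb : z b = zf (b : ℕ) := by
    rw [hzf]
    simp only
    rw [dif_pos hb2]
  simp only [Pi.sub_apply, Pi.smul_apply, smul_eq_mul, mulX_apply, mulY_apply]
  rcases Nat.eq_zero_or_pos (b : ℕ) with h0 | hpos
  · rw [dif_pos (by omega), dif_neg (by omega), hzb, h0]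
    simp [hG0]
  · rcases le_or_gt (b : ℕ) n with hle | hgt
    · have hpos1 : 1 ≤ (b : ℕ) := hpos
      rw [dif_pos hle, dif_pos hpos1, hzb]
      obtain ⟨m, hm⟩ : ∃ m, (b : ℕ) = m + 1 := ⟨(b : ℕ) - 1, by omega⟩
      rw [hm, hGrec m, Nat.add_sub_cancel]
      ring
    · have hbn : (b : ℕ) = n + 1 := by omega
      have hpos1 : 1 ≤ (b : ℕ) := hpos
      rw [dif_neg (by omega), dif_pos hpos1, hzb, hbn, Nat.add_sub_cancel]
      have hrec := hGrec n
      rw [← hEvG, hz] at hrec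
      linear_combination hrec

lemma surj_step {n : ℕ} (W : Submodule ℂ (Fin (n + 1) → ℂ)) (W' : Submodule ℂ (Fin (n + 2) → ℂ))
    (c : ℂ) (hL : ∀ v ∈ W, mulX n v - c • mulY n v ∈ W')
    (u : Fin (n + 2) → ℂ) (hu : u ∈ W') (hev : Ev (n + 1) c u ≠ 0) :
    Module.finrank ℂ W + 1 ≤ Module.finrank ℂ W' := by
  classical
  let L : (Fin (n + 1) → ℂ) →ₗ[ℂ] (Fin (n + 2) → ℂ) := mulX n - c • mulY n
  let Q : (Fin (n + 1) → ℂ) →ₗ[ℂ] ((Fin (n + 2) → ℂ) ⧸ W') := W'.mkQ.comp L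
  have hLapp : ∀ v, L v = mulX n v - c • mulY n v := by
    intro v; simp [L]
  have hWker : W ≤ LinearMap.ker Q := by
    intro v hv
    simp only [Q, LinearMap.mem_ker, LinearMap.comp_apply, Submodule.mkQ_apply]
    rw [Submodule.Quotient.mk_eq_zero, hLapp]
    exact hL v hv
  have hsurj : Function.Surjective Q := by
    intro vb
    obtain ⟨v, rfl⟩ := Submodule.Quotient.mk_surjective _ vb
    have hz : Ev (n + 1) c (v - (Ev (n + 1) c v / Ev (n + 1) c u) • u) = 0 := by
      rw [Ev_sub_smul, div_mul_cancel₀ _ hev, sub_self]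
    obtain ⟨g, hg⟩ := exists_preimage n c _ hz
    refine ⟨g, ?_⟩
    show Submodule.Quotient.mk (L g) = Submodule.Quotient.mk v
    rw [hLapp, hg]
    rw [Submodule.Quotient.eq]
    have hre : v - (Ev (n + 1) c v / Ev (n + 1) c u) • u - v
        = -((Ev (n + 1) c v / Ev (n + 1) c u) • u) := by
      abel
    rw [hre]
    exact Submodule.neg_mem _ (Submodule.smul_mem _ _ hu)
  have h1 : Module.finrank ℂ (LinearMap.range Q) + Module.finrank ℂ (LinearMap.ker Q) = n + 1 := by
    rw [LinearMap.finrank_range_add_finrank_ker]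
    exact Module.finrank_fin_fun ℂ
  have h2 : Module.finrank ℂ (LinearMap.range Q)
      = Module.finrank ℂ ((Fin (n + 2) → ℂ) ⧸ W') := by
    rw [LinearMap.range_eq_top.2 hsurj]
    exact finrank_top ℂ _
  have h3 : Module.finrank ℂ ((Fin (n + 2) → ℂ) ⧸ W') + Module.finrank ℂ W' = n + 2 := by
    rw [Submodule.finrank_quotient_add_finrank W']
    exact Module.finrank_fin_fun ℂ
  have h4 : Module.finrank ℂ W ≤ Module.finrank ℂ (LinearMap.ker Q) :=
    Submodule.finrank_mono hWker
  omega

lemma mulX_Wsub {I : Ideal Rhat} {i : ℕ} {v : Fin (i + 1) → ℂ} (hv : v ∈ Wsub I i) :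
    mulX i v ∈ Wsub I (i + 1) := by
  rcases mem_Wsub.1 hv with ⟨f, ⟨hfI, hfV⟩, rfl⟩
  refine mem_Wsub.2 ⟨X 0 * f, ⟨I.mul_mem_left _ hfI, ?_⟩, (cmap_X0_mul i f)⟩
  have := mul_mem_V (X_mem_V1 0) hfV
  rwa [Nat.add_comm] at this

lemma mulY_Wsub {I : Ideal Rhat} {i : ℕ} {v : Fin (i + 1) → ℂ} (hv : v ∈ Wsub I i) :
    mulY i v ∈ Wsub I (i + 1) := by
  rcases mem_Wsub.1 hv with ⟨f, ⟨hfI, hfV⟩, rfl⟩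
  refine mem_Wsub.2 ⟨X 1 * f, ⟨I.mul_mem_left _ hfI, ?_⟩, (cmap_X1_mul i f)⟩
  have := mul_mem_V (X_mem_V1 1) hfV
  rwa [Nat.add_comm] at this

lemma Wsub_mono {I I' : Ideal Rhat} (h : I' ≤ I) (i : ℕ) : Wsub I' i ≤ Wsub I i :=
  Submodule.map_mono (by
    intro x hx
    rw [Submodule.restrictScalars_mem] at hx ⊢
    exact ⟨h hx.1, hx.2⟩)

lemma hsType_mono {I I' : Ideal Rhat} (h : I' ≤ I) (i : ℕ) : hsType I i ≤ hsType I' i := by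
  have h1 := hsType_add I i
  have h2 := hsType_add I' i
  have h3 : Module.finrank ℂ (Wsub I' i) ≤ Module.finrank ℂ (Wsub I i) :=
    Submodule.finrank_mono (Wsub_mono h i)
  omega

lemma exists_Wsub_ne_bot {I : Ideal Rhat} (hI : I ≠ ⊥) : ∃ i, Wsub I i ≠ ⊥ := by
  classical
  obtain ⟨f, hfI, hf0⟩ := (Submodule.ne_bot_iff I).1 hI
  have hP : ∃ m, ∃ e : Fin 2 →₀ ℕ, deg e = m ∧ coeff (R := ℂ) e f ≠ 0 := by
    by_contra h
    push_neg at h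
    exact hf0 (MvPowerSeries.ext fun e => by
      have := h (deg e) e rfl
      simpa using this)
  set d := Nat.find hP with hd
  have hfV : f ∈ V d := by
    intro e he
    by_contra hc
    exact Nat.find_min hP he ⟨e, rfl, hc⟩
  obtain ⟨e, hdeg, hne⟩ := Nat.find_spec hP
  refine ⟨d, (Submodule.ne_bot_iff _).2 ⟨cmap d f, mem_Wsub.2 ⟨f, ⟨hfI, hfV⟩, rfl⟩, ?_⟩⟩
  intro h0
  apply hne
  have hdeg' : deg e = d := by convert hdeg using 1
  have he1 : e 1 < d + 1 := by simp only [deg] at hdeg'; omega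
  have hee : e = ex (d - e 1) (e 1) := by
    have h0' : e 0 = d - e 1 := by simp only [deg] at hdeg'; omega
    conv_lhs => rw [← ex_eq e]
    rw [h0']
  rw [hee, ← cmap_apply d f ⟨e 1, he1⟩, h0]
  rfl

lemma exists_Ev_ne_zero {n : ℕ} {w : Fin (n + 1) → ℂ} (hw : w ≠ 0) :
    ∃ c : ℂ, Ev n c w ≠ 0 := by
  classical
  obtain ⟨b0, hb0⟩ : ∃ b, w b ≠ 0 := by
    by_contra h; push_neg at h; exact hw (funext h)
  set q : Polynomial ℂ := ∑ b : Fin (n + 1), Polynomial.C (w b) * Polynomial.X ^ (n - (b : ℕ))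
    with hq
  have hqc : q.coeff (n - (b0 : ℕ)) = w b0 := by
    rw [hq, Polynomial.finset_sum_coeff]
    rw [Finset.sum_eq_single b0]
    · rw [Polynomial.coeff_C_mul, Polynomial.coeff_X_pow, if_pos rfl, mul_one]
    · intro b _ hb
      rw [Polynomial.coeff_C_mul, Polynomial.coeff_X_pow, if_neg, mul_zero]
      intro hcon
      apply hb
      apply Fin.ext
      have h1 := b.isLt
      have h2 := b0.isLt
      omega
    · intro h
      exact absurd (Finset.mem_univ b0) h
  have hq0 : q ≠ 0 := by
    intro h
    apply hb0
    rw [← hqc, h, Polynomial.coeff_zero]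
  obtain ⟨c, hc⟩ := (Polynomial.finite_setOf_isRoot hq0).infinite_compl.nonempty
  refine ⟨c, ?_⟩
  have hev : Polynomial.eval c q = Ev n c w := by
    rw [hq, Polynomial.eval_finset_sum, Ev]
    apply Finset.sum_congr rfl
    intro b _
    rw [Polynomial.eval_mul, Polynomial.eval_C, Polynomial.eval_pow, Polynomial.eval_X]
    ring
  rw [← hev]
  exact hc

lemma admissible_hsType {I : Ideal Rhat} (hI : I ≠ ⊥) : Admissible (hsType I) := by
  classical
  have hex : ∃ i, Wsub I i ≠ ⊥ := exists_Wsub_ne_bot hI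
  refine ⟨Nat.find hex, ?_, ?_, ?_⟩
  · intro i hi
    have hbot : Wsub I i = ⊥ := by
      by_contra hne
      exact Nat.find_min hex hi hne
    have h := hsType_add I i
    rw [hbot, finrank_bot] at h
    omega
  · have hne : Wsub I (Nat.find hex) ≠ ⊥ := Nat.find_spec hex
    have h := hsType_add I (Nat.find hex)
    have hpos : Module.finrank ℂ (Wsub I (Nat.find hex)) ≠ 0 := fun h0 =>
      hne (Submodule.finrank_eq_zero.mp h0)
    omega
  · intro i hi
    obtain ⟨w, hwW, hwne⟩ := (Submodule.ne_bot_iff _).1 (Nat.find_spec hex)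
    obtain ⟨c, hc⟩ := exists_Ev_ne_zero hwne
    have hwit : ∀ m, Nat.find hex ≤ m → ∃ u, u ∈ Wsub I m ∧ Ev m c u ≠ 0 := by
      intro m hm
      induction m, hm using Nat.le_induction with
      | base => exact ⟨w, hwW, hc⟩
      | succ m hm ih =>
        rcases ih with ⟨u, hu, hev⟩
        exact ⟨mulY m u, mulY_Wsub hu, by rw [Ev_mulY]; exact hev⟩
    obtain ⟨u, hu, huev⟩ := hwit (i + 1) (by omega)
    have hstep := surj_step (Wsub I i) (Wsub I (i + 1)) c
      (fun v hv => Submodule.sub_mem _ (mulX_Wsub hv) (Submodule.smul_mem _ _ (mulY_Wsub hv)))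
      u hu huev
    have hstep' : Module.finrank ℂ (Wsub I i) + 1 ≤ Module.finrank ℂ (Wsub I (i + 1)) := hstep
    have h1 := hsType_add I i
    have h2 := hsType_add I (i + 1)
    omega

lemma li_X0 : LinearIndependent ℂ (fun k : ℕ => ((X 0 : Rhat) ^ k)) := by
  classical
  rw [linearIndependent_iff']
  intro s a hsum j hj
  have hco := congrArg (coeff (R := ℂ) (Finsupp.single 0 j)) hsum
  rw [map_sum, map_zero] at hco
  have hterm : ∀ k ∈ s, (coeff (R := ℂ) (Finsupp.single 0 j)) (a k • (X 0 : Rhat) ^ k)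
      = if j = k then a k else 0 := by
    intro k _
    rw [map_smul, X_pow_eq, coeff_monomial, smul_eq_mul]
    by_cases h : j = k
    · subst h
      rw [if_pos rfl, if_pos rfl, mul_one]
    · rw [if_neg, if_neg h, mul_zero]
      intro hcon
      exact h ((Finsupp.single_injective 0) hcon)
  rw [Finset.sum_congr rfl hterm, Finset.sum_ite_eq s j a, if_pos hj] at hco
  exact hco

lemma ne_bot_of_rank {I : Ideal Rhat} {m : ℕ}
    (h : Module.rank ℂ (Rhat ⧸ I) = (m : Cardinal)) : I ≠ ⊥ := by
  intro hbot
  subst hbot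
  have hinj : Function.Injective (Ideal.Quotient.mkₐ ℂ (⊥ : Ideal Rhat)) := by
    intro x y hxy
    have := Ideal.Quotient.eq.1 hxy
    simpa [sub_eq_zero] using this
  have hli : LinearIndependent ℂ
      (fun k : ℕ => (Ideal.Quotient.mkₐ ℂ (⊥ : Ideal Rhat)).toLinearMap ((X 0 : Rhat) ^ k)) :=
    li_X0.map' _ (LinearMap.ker_eq_bot.2 hinj)
  have hcard := hli.cardinal_le_rank
  rw [h, Cardinal.mk_nat] at hcard
  exact absurd (hcard.trans_lt (Cardinal.nat_lt_aleph0 m)) (lt_irrefl _)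

def StairClosed (t : ℕ → ℕ) : Prop :=
  ∀ a b a' b' : ℕ, a' ≤ a → b' ≤ b → b < t (a + b) → b' < t (a' + b')

lemma Admissible.dec {t : ℕ → ℕ} {d : ℕ} (h3 : ∀ i, d ≤ i → t (i + 1) ≤ t i) :
    ∀ s s', d ≤ s → s ≤ s' → t s' ≤ t s := by
  intro s s' hds hss
  induction s', hss using Nat.le_induction with
  | base => exact le_refl _
  | succ s' hss ih => exact le_trans (h3 s' (by omega)) ih

lemma Admissible.stairClosed {t : ℕ → ℕ} (ht : Admissible t) : StairClosed t := by
  obtain ⟨d, h1, h2, h3⟩ := ht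
  intro a b a' b' ha hb hlt
  rcases lt_or_ge (a' + b') d with hlt' | hge'
  · rw [h1 _ hlt']; omega
  · have hmono : t (a + b) ≤ t (a' + b') := Admissible.dec h3 _ _ hge' (by omega)
    omega

lemma Admissible.le_succ {t : ℕ → ℕ} (ht : Admissible t) : ∀ i, t i ≤ i + 1 := by
  obtain ⟨d, h1, h2, h3⟩ := ht
  intro i
  rcases lt_or_ge i d with hlt | hge
  · rw [h1 _ hlt]
  · have := Admissible.dec h3 d i (le_refl _) hge
    omega

def stair (t : ℕ → ℕ) (ht : StairClosed t) : Ideal Rhat where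
  carrier := {f | ∀ e : Fin 2 →₀ ℕ, e 1 < t (deg e) → coeff (R := ℂ) e f = 0}
  add_mem' := by
    intro f g hf hg e he
    simp only [map_add, hf e he, hg e he, add_zero]
  zero_mem' := by intro e he; simp
  smul_mem' := by
    intro r f hf e he
    rw [smul_eq_mul, coeff_mul]
    apply Finset.sum_eq_zero
    intro p hp
    rw [Finset.HasAntidiagonal.mem_antidiagonal] at hp
    have hle : p.2 ≤ e := by rw [← hp]; exact le_add_self
    have h0 := (comp_of_le hle).1
    have h1 := (comp_of_le hle).2
    simp only [deg] at he
    have hp2 : p.2 1 < t (p.2 0 + p.2 1) := ht (e 0) (e 1) (p.2 0) (p.2 1) h0 h1 he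
    rw [hf p.2 (by simpa [deg] using hp2), mul_zero]

lemma mem_stair {t : ℕ → ℕ} {ht : StairClosed t} {f : Rhat} :
    f ∈ stair t ht ↔ ∀ e : Fin 2 →₀ ℕ, e 1 < t (deg e) → coeff (R := ℂ) e f = 0 := Iff.rfl

lemma stair_mono {t t' : ℕ → ℕ} {ht : StairClosed t} {ht' : StairClosed t'}
    (h : ∀ i, t i ≤ t' i) : stair t' ht' ≤ stair t ht := by
  intro f hf e he
  exact hf e (by have := h (deg e); omega)

def stairFinset (t : ℕ → ℕ) (N : ℕ) : Finset (ℕ × ℕ) :=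
  (Finset.range N).biUnion fun s => (Finset.range (t s)).image fun b => (s - b, b)

lemma mem_stairFinset {t : ℕ → ℕ} {N : ℕ} (hN : ∀ s, N ≤ s → t s = 0)
    (ht1 : ∀ s, t s ≤ s + 1) {p : ℕ × ℕ} :
    p ∈ stairFinset t N ↔ p.2 < t (p.1 + p.2) := by
  simp only [stairFinset, Finset.mem_biUnion, Finset.mem_range, Finset.mem_image]
  constructor
  · rintro ⟨s, hs, b, hb, rfl⟩
    have hbs : b ≤ s := by have := ht1 s; omega
    have hsum : s - b + b = s := by omega
    simpa [hsum] using hb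
  · intro h
    refine ⟨p.1 + p.2, ?_, p.2, h, ?_⟩
    · by_contra hns
      push_neg at hns
      rw [hN _ hns] at h
      omega
    · have h2 : p.1 + p.2 - p.2 = p.1 := by omega
      rw [h2]

lemma card_stairFinset (t : ℕ → ℕ) (N : ℕ) (ht1 : ∀ s, t s ≤ s + 1) :
    (stairFinset t N).card = ∑ s ∈ Finset.range N, t s := by
  rw [stairFinset, Finset.card_biUnion]
  · apply Finset.sum_congr rfl
    intro s _
    rw [Finset.card_image_of_injective _ (fun b b' h => by
      simpa using congrArg Prod.snd h), Finset.card_range]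
  · intro s1 _ s2 _ hne
    rw [Function.onFun, Finset.disjoint_left]
    rintro p hp1 hp2
    simp only [Finset.mem_image, Finset.mem_range] at hp1 hp2
    obtain ⟨b1, hb1, rfl⟩ := hp1
    obtain ⟨b2, hb2, hEq⟩ := hp2
    have e2 : b2 = b1 := by simpa using congrArg Prod.snd hEq
    subst e2
    have h1 : b2 ≤ s1 := by have := ht1 s1; omega
    have h2 : b2 ≤ s2 := by have := ht1 s2; omega
    have := congrArg Prod.fst hEq
    simp only at this
    omega

def liftE (E : Finset (ℕ × ℕ)) (v : ↥E → ℂ) : Rhat :=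
  fun e => if h : (e 0, e 1) ∈ E then v ⟨(e 0, e 1), h⟩ else 0

lemma coeff_liftE (E : Finset (ℕ × ℕ)) (v : ↥E → ℂ) (e : Fin 2 →₀ ℕ) :
    coeff (R := ℂ) e (liftE E v) = if h : (e 0, e 1) ∈ E then v ⟨(e 0, e 1), h⟩ else 0 := rfl

def stairProj (E : Finset (ℕ × ℕ)) : Rhat →ₗ[ℂ] (↥E → ℂ) where
  toFun f := fun p => coeff (R := ℂ) (ex p.1.1 p.1.2) f
  map_add' := by intro f g; funext p; simp
  map_smul' := by intro c f; funext p; simp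

lemma stairProj_surj (E : Finset (ℕ × ℕ)) : Function.Surjective (stairProj E) := by
  intro v
  refine ⟨liftE E v, ?_⟩
  funext p
  show coeff (R := ℂ) (ex p.1.1 p.1.2) (liftE E v) = v p
  rw [coeff_liftE]
  simp only [ex_apply0, ex_apply1, Prod.mk.eta]
  rw [dif_pos p.2]

lemma ker_stairProj (t : ℕ → ℕ) (ht : StairClosed t) (N : ℕ)
    (hN : ∀ s, N ≤ s → t s = 0) (ht1 : ∀ s, t s ≤ s + 1) :
    LinearMap.ker (stairProj (stairFinset t N)) = (stair t ht).restrictScalars ℂ := by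
  ext f
  simp only [LinearMap.mem_ker, Submodule.restrictScalars_mem]
  constructor
  · intro h e he
    have hmem : (e 0, e 1) ∈ stairFinset t N := by
      rw [mem_stairFinset hN ht1]
      simpa [deg] using he
    have := congrFun h ⟨(e 0, e 1), hmem⟩
    show coeff (R := ℂ) e f = 0
    rw [← ex_eq e]
    exact this
  · intro h
    funext p
    have hp := p.2
    rw [mem_stairFinset hN ht1] at hp
    show coeff (R := ℂ) (ex p.1.1 p.1.2) f = 0
    apply h
    simpa [deg] using hp

lemma rank_quotient_stair (t : ℕ → ℕ) (ht : StairClosed t) (N : ℕ)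
    (hN : ∀ s, N ≤ s → t s = 0) (ht1 : ∀ s, t s ≤ s + 1) :
    Module.rank ℂ (Rhat ⧸ stair t ht) = ((stairFinset t N).card : Cardinal) := by
  have e1 : (Rhat ⧸ (stair t ht : Submodule Rhat Rhat).restrictScalars ℂ) ≃ₗ[ℂ]
      Rhat ⧸ stair t ht :=
    Submodule.Quotient.restrictScalarsEquiv ℂ _
  have e2 : (Rhat ⧸ (stair t ht : Submodule Rhat Rhat).restrictScalars ℂ) ≃ₗ[ℂ]
      (↥(stairFinset t N) → ℂ) :=
    (Submodule.quotEquivOfEq _ _ (ker_stairProj t ht N hN ht1).symm).trans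
      ((stairProj (stairFinset t N)).quotKerEquivOfSurjective (stairProj_surj _))
  rw [← e1.rank_eq, e2.rank_eq, rank_fun']
  rw [Fintype.card_coe]

def coordSub (n m : ℕ) : Submodule ℂ (Fin n → ℂ) where
  carrier := {v | ∀ b : Fin n, (b : ℕ) < m → v b = 0}
  add_mem' := by
    intro u v hu hv b hb
    simp [hu b hb, hv b hb]
  zero_mem' := by intro b hb; simp
  smul_mem' := by
    intro c v hv b hb
    simp [hv b hb]

def coordEquiv (n m : ℕ) (hm : m ≤ n) : ↥(coordSub n m) ≃ₗ[ℂ] (Fin (n - m) → ℂ) where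
  toFun v := fun j => v.1 ⟨m + (j : ℕ), by have := j.isLt; omega⟩
  invFun w := ⟨fun b => if h : m ≤ (b : ℕ) then w ⟨(b : ℕ) - m, by have := b.isLt; omega⟩ else 0,
    fun b hb => by
      show (if h : m ≤ (b : ℕ) then w ⟨(b : ℕ) - m, by have := b.isLt; omega⟩ else 0) = 0
      exact dif_neg (by omega)⟩
  left_inv := by
    rintro ⟨v, hv⟩
    apply Subtype.ext
    funext b
    by_cases h : m ≤ (b : ℕ)
    · show (if h2 : m ≤ (b : ℕ) then v ⟨m + ((b : ℕ) - m), by have := b.isLt; omega⟩ else 0) = v b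
      rw [dif_pos h]
      congr 1
      apply Fin.ext
      simp only
      omega
    · show (if h2 : m ≤ (b : ℕ) then v ⟨m + ((b : ℕ) - m), by have := b.isLt; omega⟩ else 0) = v b
      rw [dif_neg h]
      exact (hv b (by omega)).symm
  right_inv := by
    intro w
    funext j
    show (if h : m ≤ m + (j : ℕ) then w ⟨m + (j : ℕ) - m, by have := j.isLt; omega⟩ else 0) = w j
    rw [dif_pos (by omega)]
    congr 1
    apply Fin.ext
    simp only
    omega
  map_add' := by intro u v; funext j; simp
  map_smul' := by intro c v; funext j; simp

lemma finrank_coordSub (n m : ℕ) (hm : m ≤ n) :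
    Module.finrank ℂ (coordSub n m) = n - m := by
  rw [(coordEquiv n m hm).finrank_eq]
  exact Module.finrank_fin_fun ℂ

lemma Wsub_stair (t : ℕ → ℕ) (ht : StairClosed t) (i : ℕ) :
    Wsub (stair t ht) i = coordSub (i + 1) (t i) := by
  apply le_antisymm
  · intro v hv
    rcases mem_Wsub.1 hv with ⟨f, ⟨hfI, hfV⟩, rfl⟩
    intro b hb
    rw [cmap_apply]
    apply hfI
    have hbi : (b : ℕ) ≤ i := by have := b.isLt; omega
    simp only [deg, ex_apply0, ex_apply1]
    have : i - (b : ℕ) + (b : ℕ) = i := by omega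
    rw [this]
    exact hb
  · intro v hv
    refine mem_Wsub.2 ⟨hlift i v, ⟨?_, hlift_mem_V i v⟩, cmap_hlift i v⟩
    intro e he
    rw [coeff_hlift]
    by_cases h : e 0 + e 1 = i
    · rw [dif_pos h]
      apply hv
      show e 1 < t i
      simp only [deg] at he
      rwa [h] at he
    · rw [dif_neg h]

lemma hsType_stair (t : ℕ → ℕ) (ht : StairClosed t) (ht1 : ∀ s, t s ≤ s + 1) (i : ℕ) :
    hsType (stair t ht) i = t i := by
  have h1 := hsType_add (stair t ht) i
  rw [Wsub_stair t ht i, finrank_coordSub (i + 1) (t i) (by have := ht1 i; omega)] at h1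
  have := ht1 i
  omega

lemma sum_one_step {s : Finset ℕ} {f g : ℕ → ℕ} (hle : ∀ i ∈ s, f i ≤ g i)
    (hsum : ∑ i ∈ s, g i = (∑ i ∈ s, f i) + 1) :
    ∃ m ∈ s, g m = f m + 1 ∧ ∀ i ∈ s, i ≠ m → g i = f i := by
  classical
  have hsplit : ∑ i ∈ s, g i = (∑ i ∈ s, f i) + ∑ i ∈ s, (g i - f i) := by
    rw [← Finset.sum_add_distrib]
    exact Finset.sum_congr rfl fun i hi => by have := hle i hi; omega
  have hd1 : ∑ i ∈ s, (g i - f i) = 1 := by omega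
  obtain ⟨m, hm, hmne⟩ : ∃ m ∈ s, g m - f m ≠ 0 := by
    by_contra h
    push_neg at h
    rw [Finset.sum_eq_zero h] at hd1
    omega
  have hle1 : g m - f m ≤ 1 := by
    have h2 := Finset.single_le_sum (f := fun i => g i - f i) (fun i _ => Nat.zero_le _) hm
    omega
  have hrest : ∑ i ∈ s.erase m, (g i - f i) = 0 := by
    have h3 := Finset.add_sum_erase s (fun i => g i - f i) hm
    omega
  refine ⟨m, hm, by have := hle m hm; omega, ?_⟩
  intro i hi hne
  have h0 := Finset.sum_eq_zero_iff.1 hrest i (Finset.mem_erase.2 ⟨hne, hi⟩)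
  have := hle i hi
  omega

lemma support_bound {t : ℕ → ℕ} (h : (Function.support t).Finite) :
    ∃ N, ∀ s, N ≤ s → t s = 0 := by
  obtain ⟨N, hN⟩ := h.bddAbove
  refine ⟨N + 1, fun s hs => ?_⟩
  by_contra h0
  have hmem : s ∈ Function.support t := h0
  have := hN hmem
  omega

lemma finsum_eq_range {t : ℕ → ℕ} {N : ℕ} (hN : ∀ s, N ≤ s → t s = 0) :
    ∑ᶠ i, t i = ∑ i ∈ Finset.range N, t i := by
  apply finsum_eq_sum_of_support_subset
  intro x hx
  simp only [Finset.coe_range, Set.mem_Iio]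
  by_contra h
  exact hx (hN x (by omega))


/-- A `k`-tuple of sequences with sums `n, n+1, …, n+k−1` is realized by a chain of
ideals `I₁ ⊇ ⋯ ⊇ I_k` of these colengths iff each sequence is admissible and each
consecutive pair differs by an increment of `1` at a single index. -/
theorem statement13 (k n : ℕ) (hk : 1 ≤ k) (t : Fin k → ℕ → ℕ)
    (hfin : ∀ j : Fin k, (Function.support (t j)).Finite)
    (hsum : ∀ j : Fin k, (∑ᶠ i : ℕ, t j i) = n + (j : ℕ)) :
    (∃ I : Fin k → Ideal Rhat,
        (∀ j : ℕ, ∀ hj : j + 1 < k, I ⟨j + 1, hj⟩ ≤ I ⟨j, Nat.lt_of_succ_lt hj⟩) ∧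
        (∀ j : Fin k, Module.rank ℂ (Rhat ⧸ I j) = ((n + (j : ℕ) : ℕ) : Cardinal)) ∧
        (∀ j : Fin k, ∀ i : ℕ, hsType (I j) i = t j i))
      ↔ ((∀ j : Fin k, Admissible (t j)) ∧
          (∀ j : ℕ, ∀ hj : j + 1 < k, ∃ m : ℕ,
            t ⟨j + 1, hj⟩ m = t ⟨j, Nat.lt_of_succ_lt hj⟩ m + 1 ∧
            ∀ i : ℕ, i ≠ m → t ⟨j + 1, hj⟩ i = t ⟨j, Nat.lt_of_succ_lt hj⟩ i)) := by
  constructor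
  · rintro ⟨I, hchain, hrank, hts⟩
    constructor
    · intro j
      have hne : I j ≠ ⊥ := ne_bot_of_rank (hrank j)
      have heq : t j = hsType (I j) := funext fun i => (hts j i).symm
      rw [heq]
      exact admissible_hsType hne
    · intro j hj
      have hj0 : j < k := Nat.lt_of_succ_lt hj
      obtain ⟨N0, hN0⟩ := support_bound (hfin ⟨j, hj0⟩)
      obtain ⟨N1, hN1⟩ := support_bound (hfin ⟨j + 1, hj⟩)
      set N := max N0 N1 with hNdef
      have hN0' : ∀ s, N ≤ s → t ⟨j, hj0⟩ s = 0 := fun s hs => hN0 s (by omega)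
      have hN1' : ∀ s, N ≤ s → t ⟨j + 1, hj⟩ s = 0 := fun s hs => hN1 s (by omega)
      have hmono : ∀ i ∈ Finset.range N, t ⟨j, hj0⟩ i ≤ t ⟨j + 1, hj⟩ i := by
        intro i _
        rw [← hts ⟨j, hj0⟩ i, ← hts ⟨j + 1, hj⟩ i]
        exact hsType_mono (hchain j hj) i
      have hs0 : ∑ i ∈ Finset.range N, t ⟨j, hj0⟩ i = n + j := by
        rw [← finsum_eq_range hN0']
        exact hsum ⟨j, hj0⟩
      have hs1 : ∑ i ∈ Finset.range N, t ⟨j + 1, hj⟩ i = n + (j + 1) := by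
        rw [← finsum_eq_range hN1']
        exact hsum ⟨j + 1, hj⟩
      obtain ⟨m, hm, hmeq, hother⟩ := sum_one_step hmono (by omega)
      refine ⟨m, hmeq, fun i hi => ?_⟩
      by_cases hiN : i ∈ Finset.range N
      · exact hother i hiN hi
      · rw [Finset.mem_range] at hiN
        rw [hN0' i (by omega), hN1' i (by omega)]
  · rintro ⟨hadm, hstep⟩
    refine ⟨fun j => stair (t j) (hadm j).stairClosed, ?_, ?_, ?_⟩
    · intro j hj
      apply stair_mono
      intro i
      obtain ⟨m, hm1, hm2⟩ := hstep j hj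
      by_cases h : i = m
      · subst h; omega
      · rw [hm2 i h]
    · intro j
      obtain ⟨N, hN⟩ := support_bound (hfin j)
      rw [rank_quotient_stair (t j) (hadm j).stairClosed N hN (hadm j).le_succ]
      congr 1
      rw [card_stairFinset (t j) N (hadm j).le_succ, ← finsum_eq_range hN, hsum j]
    · intro j i
      exact hsType_stair (t j) (hadm j).stairClosed (hadm j).le_succ i
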